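/- For the concurrent composition Cc(Ĝ, G̃_obs) of the initial-secret subautomaton Ĝ and the observer G̃_obs of the non-secret subautomaton G̃: the system G is strongly K-step opaque (Definition 3.1) with respect to Σ_o and X_S if and only if no state of the form (x, ∅) in Cc(Ĝ, G̃_obs) is reachable from an initial state of Cc(Ĝ, G̃_obs) by a path whose label sequence contains at most K observable events. -/

import Mathlib

namespace SBO

variable {X E : Type}

/-- Extended transition function of an NFA. -/
def ext (δ : X → E → Set X) : X → List E → Set X
  | x, [] => {x}
  | x, σ :: s => ⋃ y ∈ δ x σ, ext δ y s

/-- A run from `x` to `z` labeled by `s`. -/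
def IsRun (δ : X → E → Set X) : X → List E → X → Prop
  | x, [], z => x = z
  | x, σ :: s, z => ∃ y ∈ δ x σ, IsRun δ y s z

/-- A run all of whose states lie in `NS`. -/
def IsNSRun (δ : X → E → Set X) (NS : Set X) : X → List E → X → Prop
  | x, [], z => x = z ∧ x ∈ NS
  | x, σ :: s, z => x ∈ NS ∧ ∃ y ∈ δ x σ, IsNSRun δ NS y s z

/-- Natural projection onto observable events. -/
def proj (Eo : E → Bool) (s : List E) : List E := s.filter Eo

/-- Strong K-step opacity, Definition 3.1 (suffix of the matching run is non-secret). -/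
def KSSO (δ : X → E → Set X) (Eo : E → Bool) (X0 XS : Set X) (K : ℕ) : Prop :=
  ∀ x0 ∈ X0, ∀ s1 s2 : List E, ∀ x1 x2 : X,
    IsRun δ x0 s1 x1 → x1 ∈ XS → IsRun δ x1 s2 x2 → (proj Eo s2).length ≤ K →
    ∃ x0' ∈ X0, ∃ s1' s2' : List E, ∃ x1' x2' : X,
      IsRun δ x0' s1' x1' ∧ IsNSRun δ XSᶜ x1' s2' x2' ∧
      proj Eo s1' = proj Eo s1 ∧ proj Eo s2' = proj Eo s2

/-- Strong K-step opacity, Definition 3.1b (matching run entirely non-secret). -/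
def KSSOb (δ : X → E → Set X) (Eo : E → Bool) (X0 XS : Set X) (K : ℕ) : Prop :=
  ∀ x0 ∈ X0, ∀ s1 s2 : List E, ∀ x1 x2 : X,
    IsRun δ x0 s1 x1 → x1 ∈ XS → IsRun δ x1 s2 x2 → (proj Eo s2).length ≤ K →
    ∃ x0' ∈ X0, ∃ s1' s2' : List E, ∃ x1' x2' : X,
      IsNSRun δ XSᶜ x0' s1' x1' ∧ IsNSRun δ XSᶜ x1' s2' x2' ∧
      proj Eo s1' = proj Eo s1 ∧ proj Eo s2' = proj Eo s2

/-- Standard current-state opacity. -/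
def CSO (δ : X → E → Set X) (Eo : E → Bool) (X0 XS : Set X) : Prop :=
  ∀ x0 ∈ X0, ∀ s : List E, (∃ z ∈ ext δ x0 s, z ∈ XS) →
    ∃ x0' ∈ X0, ∃ s' : List E, proj Eo s' = proj Eo s ∧ ∃ z ∈ ext δ x0' s', z ∈ XSᶜ

/-- Strong current-state opacity. -/
def SCSO (δ : X → E → Set X) (Eo : E → Bool) (X0 XS : Set X) : Prop :=
  ∀ x0 ∈ X0, ∀ s : List E, (∃ z ∈ ext δ x0 s, z ∈ XS) →
    ∃ x0' ∈ X0 \ XS, ∃ t : List E, ∃ x : X, IsNSRun δ XSᶜ x0' t x ∧ proj Eo t = proj Eo s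

/-- Strong initial-state opacity. -/
def SISO (δ : X → E → Set X) (Eo : E → Bool) (X0 XS : Set X) : Prop :=
  ∀ x0 ∈ X0 ∩ XS, ∀ s : List E, (ext δ x0 s).Nonempty →
    ∃ x0' ∈ X0 \ XS, ∃ t : List E, ∃ x : X, IsNSRun δ XSᶜ x0' t x ∧ proj Eo t = proj Eo s

/-- Strong infinite-step opacity. -/
def InfSSO (δ : X → E → Set X) (Eo : E → Bool) (X0 XS : Set X) : Prop :=
  ∀ x0 ∈ X0, ∀ s1 s2 : List E, (ext δ x0 (s1 ++ s2)).Nonempty →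
    (∃ z ∈ ext δ x0 s1, z ∈ XS) →
    ∃ x0' ∈ X0 \ XS, ∃ t : List E, ∃ x : X, IsNSRun δ XSᶜ x0' t x ∧
      proj Eo t = proj Eo (s1 ++ s2)

/-- Observer transition on one observable event (empty set = undefined). -/
def obsStep (δ : X → E → Set X) (Eo : E → Bool) (q : Set X) (σ : E) : Set X :=
  {x' | ∃ x ∈ q, ∃ w : List E, (∀ e ∈ w, Eo e = false) ∧ x' ∈ ext δ x (σ :: w)}

/-- Initial observer state: unobservable reach of the initial states. -/
def obsInit (δ : X → E → Set X) (Eo : E → Bool) (X0 : Set X) : Set X :=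
  {x' | ∃ x ∈ X0, ∃ w : List E, (∀ e ∈ w, Eo e = false) ∧ x' ∈ ext δ x w}

/-- Observer transition extended to observation strings. -/
def obsExt (δ : X → E → Set X) (Eo : E → Bool) : Set X → List E → Set X
  | q, [] => q
  | q, σ :: α => obsExt δ Eo (obsStep δ Eo q σ) α

/-- Synchronous step of `Cc(G, Obs(G))`. -/
def ccStep (δ : X → E → Set X) (Eo : E → Bool) (p p' : X × Set X) : Prop :=
  ∃ σ : E,
    (Eo σ = true ∧ p'.1 ∈ δ p.1 σ ∧ (obsStep δ Eo p.2 σ).Nonempty ∧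
      p'.2 = obsStep δ Eo p.2 σ) ∨
    (Eo σ = false ∧ p'.1 ∈ δ p.1 σ ∧ p'.2 = p.2)

/-- Reachability in `Cc(G, Obs(G))`. -/
def ccReach (δ : X → E → Set X) (Eo : E → Bool) (X0 : Set X) (p : X × Set X) : Prop :=
  ∃ x ∈ obsInit δ Eo X0, Relation.ReflTransGen (ccStep δ Eo) (x, obsInit δ Eo X0) p

/-- Deleting a set of transitions from an NFA. -/
def delTrans (δ : X → E → Set X) (Edel : Set (X × E × X)) : X → E → Set X :=
  fun x σ => {y ∈ δ x σ | (x, σ, y) ∉ Edel}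

/-- Transitions of the non-secret subautomaton (secret states deleted). -/
def δdss (δ : X → E → Set X) (XS : Set X) : X → E → Set X :=
  fun x σ => {y ∈ δ x σ | x ∉ XS ∧ y ∉ XS}

/-- One step of the concurrent composition `Cc(Ĝ, G̃_obs)`. -/
def cc2Step (δ δt : X → E → Set X) (Eo : E → Bool) (p : X × Set X) (σ : E) :
    Set (X × Set X) :=
  if Eo σ then {p' | p'.1 ∈ δ p.1 σ ∧ p'.2 = obsStep δt Eo p.2 σ}
  else {p' | p'.1 ∈ δ p.1 σ ∧ p'.2 = p.2}

/-- Extended transition function of `Cc(Ĝ, G̃_obs)`. -/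
def cc2Ext (δ δt : X → E → Set X) (Eo : E → Bool) : (X × Set X) → List E → Set (X × Set X)
  | p, [] => {p}
  | p, σ :: s => ⋃ p' ∈ cc2Step δ δt Eo p σ, cc2Ext δ δt Eo p' s

/-- Initial states of `Cc(Ĝ, G̃_obs)`. -/
def ccInit (δ : X → E → Set X) (Eo : E → Bool) (X0 XS : Set X) : Set (X × Set X) :=
  {p | ∃ α : List E, (∀ e ∈ α, Eo e = true) ∧
    p.1 ∈ XS ∩ obsExt δ Eo (obsInit δ Eo X0) α ∧
    p.2 = obsExt δ Eo (obsInit δ Eo X0) α ∩ XSᶜ}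

end SBO

open SBO

namespace SBOAux

variable {X E : Type}

theorem mem_ext_nil {δ : X → E → Set X} {x z : X} : z ∈ ext δ x [] ↔ z = x := by
  simp [ext]

theorem mem_ext_cons {δ : X → E → Set X} {σ : E} {s : List E} {x z : X} :
    z ∈ ext δ x (σ :: s) ↔ ∃ y ∈ δ x σ, z ∈ ext δ y s := by
  simp [ext]

theorem mem_ext_iff {δ : X → E → Set X} :
    ∀ {s : List E} {x z : X}, z ∈ ext δ x s ↔ IsRun δ x s z
  | [], x, z => by simp [IsRun, mem_ext_nil, eq_comm]
  | σ :: s, x, z => by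
    simp only [IsRun, mem_ext_cons]
    exact exists_congr fun y => and_congr_right fun _ => mem_ext_iff

theorem mem_ext_append {δ : X → E → Set X} :
    ∀ {s t : List E} {x z : X}, z ∈ ext δ x (s ++ t) ↔ ∃ y ∈ ext δ x s, z ∈ ext δ y t
  | [], t, x, z => by simp [mem_ext_nil]
  | σ :: s, t, x, z => by
    simp only [List.cons_append, mem_ext_cons]
    constructor
    · rintro ⟨y, hy, hz⟩
      obtain ⟨w, hw, hz⟩ := mem_ext_append.mp hz
      exact ⟨w, ⟨y, hy, hw⟩, hz⟩
    · rintro ⟨w, ⟨y, hy, hw⟩, hz⟩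
      exact ⟨y, hy, mem_ext_append.mpr ⟨w, hw, hz⟩⟩

theorem mem_ext_single {δ : X → E → Set X} {σ : E} {x z : X} :
    z ∈ ext δ x [σ] ↔ z ∈ δ x σ := by
  simp [ext]

theorem proj_nil_of_unobs {Eo : E → Bool} {w : List E} (hw : ∀ e ∈ w, Eo e = false) :
    proj Eo w = [] := by
  simp only [proj, List.filter_eq_nil_iff]
  intro a ha; simp [hw a ha]

theorem mem_proj_true {Eo : E → Bool} {s : List E} {σ : E} (h : σ ∈ proj Eo s) :
    Eo σ = true := (List.mem_filter.mp h).2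

/-- `q` is closed under unobservable transitions. -/
def Closed (δ : X → E → Set X) (Eo : E → Bool) (q : Set X) : Prop :=
  ∀ x ∈ q, ∀ σ, Eo σ = false → δ x σ ⊆ q

theorem obsStep_closed (δ : X → E → Set X) (Eo : E → Bool) (q : Set X) (σ : E) :
    Closed δ Eo (obsStep δ Eo q σ) := by
  rintro x' ⟨x, hx, w, hw, hx'⟩ τ hτ y hy
  refine ⟨x, hx, w ++ [τ], ?_, ?_⟩
  · intro e he
    rcases List.mem_append.mp he with h | h
    · exact hw e h
    · simp at h; subst h; exact hτ
  · have : y ∈ ext δ x ((σ :: w) ++ [τ]) :=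
      mem_ext_append.mpr ⟨x', hx', mem_ext_single.mpr hy⟩
    simpa using this

theorem obsInit_closed (δ : X → E → Set X) (Eo : E → Bool) (X0 : Set X) :
    Closed δ Eo (obsInit δ Eo X0) := by
  rintro x' ⟨x, hx, w, hw, hx'⟩ τ hτ y hy
  refine ⟨x, hx, w ++ [τ], ?_, mem_ext_append.mpr ⟨x', hx', mem_ext_single.mpr hy⟩⟩
  intro e he
  rcases List.mem_append.mp he with h | h
  · exact hw e h
  · simp at h; subst h; exact hτ

theorem mem_obsInit {δ : X → E → Set X} {Eo : E → Bool} {X0 : Set X} {x : X}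
    (hx : x ∈ X0) : x ∈ obsInit δ Eo X0 :=
  ⟨x, hx, [], by simp, mem_ext_nil.mpr rfl⟩

/-- Forward direction of observer correctness, for unobservably-closed `q`. -/
theorem mem_obsExt_of_ext {δ : X → E → Set X} {Eo : E → Bool} :
    ∀ {t : List E} {q : Set X} {x z : X}, Closed δ Eo q → x ∈ q → z ∈ ext δ x t →
      z ∈ obsExt δ Eo q (proj Eo t)
  | [], q, x, z, _, hx, hz => by
    rw [mem_ext_nil.mp hz]; simpa [proj, obsExt] using hx
  | σ :: t, q, x, z, hc, hx, hz => by
    obtain ⟨y, hy, hz⟩ := mem_ext_cons.mp hz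
    by_cases h : Eo σ
    · have hy' : y ∈ obsStep δ Eo q σ :=
        ⟨x, hx, [], by simp, mem_ext_cons.mpr ⟨y, hy, mem_ext_nil.mpr rfl⟩⟩
      have := mem_obsExt_of_ext (obsStep_closed δ Eo q σ) hy' hz
      simpa [proj, List.filter_cons, h, obsExt] using this
    · have hy' : y ∈ q := hc x hx σ (by simp [h]) hy
      have := mem_obsExt_of_ext hc hy' hz
      simpa [proj, List.filter_cons, h] using this

/-- Backward direction of observer correctness. -/
theorem exists_of_mem_obsExt {δ : X → E → Set X} {Eo : E → Bool} :
    ∀ {β : List E}, (∀ σ ∈ β, Eo σ = true) → ∀ {q : Set X} {z : X},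
      z ∈ obsExt δ Eo q β → ∃ x ∈ q, ∃ t, proj Eo t = β ∧ z ∈ ext δ x t
  | [], _, q, z, hz => ⟨z, hz, [], by simp [proj], mem_ext_nil.mpr rfl⟩
  | σ :: β, hβ, q, z, hz => by
    have hz' : z ∈ obsExt δ Eo (obsStep δ Eo q σ) β := hz
    obtain ⟨x', hx', t', ht', hzt⟩ :=
      exists_of_mem_obsExt (fun τ hτ => hβ τ (List.mem_cons_of_mem _ hτ)) hz'
    obtain ⟨x, hx, w, hw, hxw⟩ := hx'
    refine ⟨x, hx, σ :: (w ++ t'), ?_, ?_⟩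
    · have hσ : Eo σ = true := hβ σ List.mem_cons_self
      simp only [proj, List.filter_cons, hσ, List.filter_append]
      have h1 : List.filter Eo w = [] := proj_nil_of_unobs hw
      have h2 : List.filter Eo t' = β := ht'
      simp [h1, h2]
    · have : z ∈ ext δ x ((σ :: w) ++ t') := mem_ext_append.mpr ⟨x', hxw, hzt⟩
      simpa using this

theorem mem_δdss {δ : X → E → Set X} {XS : Set X} {x σ y} :
    y ∈ δdss δ XS x σ ↔ y ∈ δ x σ ∧ x ∉ XS ∧ y ∉ XS := Iff.rfl

theorem isNSRun_head {δ : X → E → Set X} {XS : Set X} :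
    ∀ {s : List E} {x z : X}, IsNSRun δ XSᶜ x s z → x ∉ XS
  | [], _, _, h => h.2
  | _ :: _, _, _, h => h.1

theorem isNSRun_iff {δ : X → E → Set X} {XS : Set X} :
    ∀ {s : List E} {x z : X}, x ∉ XS →
      (IsNSRun δ XSᶜ x s z ↔ z ∈ ext (δdss δ XS) x s)
  | [], x, z, hx => by
    simp only [IsNSRun, mem_ext_nil]
    constructor
    · rintro ⟨h, -⟩; exact h.symm
    · intro h; exact ⟨h.symm, hx⟩
  | σ :: s, x, z, hx => by
    simp only [IsNSRun, mem_ext_cons]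
    constructor
    · rintro ⟨-, y, hy, hns⟩
      have hyns : y ∉ XS := isNSRun_head hns
      exact ⟨y, mem_δdss.mpr ⟨hy, hx, hyns⟩, (isNSRun_iff hyns).mp hns⟩
    · rintro ⟨y, hy, hz⟩
      obtain ⟨hy1, -, hy3⟩ := mem_δdss.mp hy
      exact ⟨hx, y, hy1, (isNSRun_iff hy3).mpr hz⟩

theorem qcap_closed (δ : X → E → Set X) (Eo : E → Bool) (X0 XS : Set X) {α : List E}
    (hα : ∀ σ ∈ α, Eo σ = true) :
    Closed (δdss δ XS) Eo (obsExt δ Eo (obsInit δ Eo X0) α ∩ XSᶜ) := by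
  rintro x ⟨hxq, hxs⟩ τ hτ y hy
  obtain ⟨hy1, -, hy3⟩ := mem_δdss.mp hy
  refine ⟨?_, hy3⟩
  obtain ⟨x', hx', t, ht, hxt⟩ := exists_of_mem_obsExt hα hxq
  have hyext : y ∈ ext δ x' (t ++ [τ]) :=
    mem_ext_append.mpr ⟨x, hxt, mem_ext_single.mpr hy1⟩
  have := mem_obsExt_of_ext (obsInit_closed δ Eo X0) hx' hyext
  have hproj : proj Eo (t ++ [τ]) = α := by
    simp only [proj, List.filter_append] at *
    simp [ht, hτ]
  rwa [hproj] at this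

theorem mem_cc2Ext_iff {δ δt : X → E → Set X} {Eo : E → Bool} :
    ∀ {e : List E} {x : X} {q : Set X} {y : X} {q' : Set X},
      (y, q') ∈ cc2Ext δ δt Eo (x, q) e ↔
        y ∈ ext δ x e ∧ q' = obsExt δt Eo q (proj Eo e)
  | [], x, q, y, q' => by
    simp [cc2Ext, mem_ext_nil, proj, obsExt, Prod.ext_iff]
  | σ :: e, x, q, y, q' => by
    by_cases h : Eo σ
    · constructor
      · intro hm
        simp only [cc2Ext, Set.mem_iUnion] at hm
        obtain ⟨p', hp', hm⟩ := hm
        simp only [cc2Step, h, if_true, Set.mem_setOf_eq] at hp'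
        obtain ⟨hp1, hp2⟩ := hp'
        obtain ⟨y0, q0⟩ := p'
        simp only at hp1 hp2
        subst hp2
        obtain ⟨hy, hq'⟩ := mem_cc2Ext_iff.mp hm
        refine ⟨mem_ext_cons.mpr ⟨y0, hp1, hy⟩, ?_⟩
        simp [proj, List.filter_cons, h, obsExt, hq']
      · rintro ⟨hy, hq'⟩
        obtain ⟨y0, hy0, hy⟩ := mem_ext_cons.mp hy
        simp only [cc2Ext, Set.mem_iUnion]
        refine ⟨(y0, obsStep δt Eo q σ), ?_, ?_⟩
        · simp [cc2Step, h, hy0]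
        · refine mem_cc2Ext_iff.mpr ⟨hy, ?_⟩
          simpa [proj, List.filter_cons, h, obsExt] using hq'
    · constructor
      · intro hm
        simp only [cc2Ext, Set.mem_iUnion] at hm
        obtain ⟨p', hp', hm⟩ := hm
        simp only [cc2Step, h, if_false, Set.mem_setOf_eq] at hp'
        obtain ⟨hp1, hp2⟩ := hp'
        obtain ⟨y0, q0⟩ := p'
        simp only at hp1 hp2
        subst hp2
        obtain ⟨hy, hq'⟩ := mem_cc2Ext_iff.mp hm
        refine ⟨mem_ext_cons.mpr ⟨y0, hp1, hy⟩, ?_⟩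
        simpa [proj, List.filter_cons, h] using hq'
      · rintro ⟨hy, hq'⟩
        obtain ⟨y0, hy0, hy⟩ := mem_ext_cons.mp hy
        simp only [cc2Ext, Set.mem_iUnion]
        refine ⟨(y0, q), ?_, ?_⟩
        · simp [cc2Step, h, hy0]
        · refine mem_cc2Ext_iff.mpr ⟨hy, ?_⟩
          simpa [proj, List.filter_cons, h] using hq'

theorem exists_run_of_mem_obsExt {δ : X → E → Set X} {Eo : E → Bool} {X0 : Set X}
    {α : List E} {z : X} (hα : ∀ σ ∈ α, Eo σ = true)
    (hz : z ∈ obsExt δ Eo (obsInit δ Eo X0) α) :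
    ∃ x0 ∈ X0, ∃ s, proj Eo s = α ∧ z ∈ ext δ x0 s := by
  obtain ⟨x, hx, t, ht, hzt⟩ := exists_of_mem_obsExt hα hz
  obtain ⟨x0, hx0, w, hw, hxw⟩ := hx
  refine ⟨x0, hx0, w ++ t, ?_, mem_ext_append.mpr ⟨x, hxw, hzt⟩⟩
  have h1 : proj Eo w = [] := proj_nil_of_unobs hw
  simp only [proj, List.filter_append] at h1 ht ⊢
  rw [h1, ht, List.nil_append]

end SBOAux

open SBOAux

/-- Theorem 3.1: G is K-SSO (Definition 3.1) iff no state of the form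
`(·, ∅)` of `Cc(Ĝ, G̃_obs)` is reachable from an initial state by a path with at most
K observable events. -/
theorem KSSO_iff_cc {X E : Type} (δ : X → E → Set X) (Eo : E → Bool)
    (X0 XS : Set X) (K : ℕ) :
    KSSO δ Eo X0 XS K ↔
      ¬ ∃ p0 ∈ ccInit δ Eo X0 XS, ∃ e : List E, (proj Eo e).length ≤ K ∧
        ∃ y : X, (y, (∅ : Set X)) ∈ cc2Ext δ (δdss δ XS) Eo p0 e := by
  constructor
  · intro hK
    rintro ⟨⟨x1, q2⟩, ⟨α, hα, hx1m, hp2⟩, e, hlen, y, hmem⟩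
    obtain ⟨hx1S, hx1q⟩ := hx1m
    simp only at hp2
    subst hp2
    obtain ⟨hy, hempty⟩ := mem_cc2Ext_iff.mp hmem
    obtain ⟨x0, hx0, s1, hs1, hx1ext⟩ := exists_run_of_mem_obsExt hα hx1q
    obtain ⟨x0', hx0', s1', s2', x1', x2', hrun1, hns, hp1, hp2'⟩ :=
      hK x0 hx0 s1 e x1 y (mem_ext_iff.mp hx1ext) hx1S (mem_ext_iff.mp hy) hlen
    have hx1'q : x1' ∈ obsExt δ Eo (obsInit δ Eo X0) α := by
      have := mem_obsExt_of_ext (obsInit_closed δ Eo X0) (mem_obsInit hx0')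
        (mem_ext_iff.mpr hrun1)
      rwa [hp1, hs1] at this
    have hx1'ns : x1' ∉ XS := isNSRun_head hns
    have hx2' : x2' ∈ ext (δdss δ XS) x1' s2' := (isNSRun_iff hx1'ns).mp hns
    have hmem2 := mem_obsExt_of_ext (qcap_closed δ Eo X0 XS hα)
      (Set.mem_inter hx1'q hx1'ns) hx2'
    rw [hp2', ← hempty] at hmem2
    exact hmem2
  · intro hcc x0 hx0 s1 s2 x1 x2 hrun1 hx1S hrun2 hlen
    have hα : ∀ σ ∈ proj Eo s1, Eo σ = true := fun σ h => mem_proj_true h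
    have hx1q : x1 ∈ obsExt δ Eo (obsInit δ Eo X0) (proj Eo s1) :=
      mem_obsExt_of_ext (obsInit_closed δ Eo X0) (mem_obsInit hx0)
        (mem_ext_iff.mpr hrun1)
    set q2 : Set X := obsExt δ Eo (obsInit δ Eo X0) (proj Eo s1) ∩ XSᶜ with hq2
    have hinit : ((x1, q2) : X × Set X) ∈ ccInit δ Eo X0 XS :=
      ⟨proj Eo s1, hα, ⟨hx1S, hx1q⟩, rfl⟩
    by_cases hne : (obsExt (δdss δ XS) Eo q2 (proj Eo s2)).Nonempty
    · obtain ⟨z, hz⟩ := hne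
      have hβ : ∀ σ ∈ proj Eo s2, Eo σ = true := fun σ h => mem_proj_true h
      obtain ⟨x1', hx1'm, t, ht, hzt⟩ := exists_of_mem_obsExt hβ hz
      obtain ⟨hx1'q, hx1'ns⟩ := hx1'm
      obtain ⟨x0', hx0', s1', hs1', hx1'ext⟩ := exists_run_of_mem_obsExt hα hx1'q
      exact ⟨x0', hx0', s1', t, x1', z, mem_ext_iff.mp hx1'ext,
        (isNSRun_iff hx1'ns).mpr hzt, hs1', ht⟩
    · exfalso
      apply hcc
      refine ⟨(x1, q2), hinit, s2, hlen, x2, ?_⟩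
      refine mem_cc2Ext_iff.mpr ⟨mem_ext_iff.mpr hrun2, ?_⟩
      rw [Set.not_nonempty_iff_eq_empty] at hne
      exact hne.symm
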